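/- For all natural numbers m ≥ 1 and n ≥ 1, the sums Σ_{k=1}^{n} (−1)^k · cot^{2m−1}((2k−1)π/(4n)) and Σ_{k=1}^{n} cot^{2m}((2k−1)π/(4n)) are integers. -/

import Mathlib

open Polynomial Finset

private lemma intcoef (t : ℕ) :
    ∃ u : ℤ, (1 + Complex.I) / 2 * Complex.I ^ t
      + (1 - Complex.I) / 2 * (-Complex.I) ^ t = (u : ℂ) := by
  have h4 : Complex.I ^ 4 = 1 := by
    simp [pow_succ, Complex.I_mul_I]
  have h4' : (-Complex.I) ^ 4 = 1 := by
    rw [neg_pow, h4]; norm_num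
  have ht : t = 4 * (t / 4) + t % 4 := (Nat.div_add_mod' t 4).symm ▸ by omega
  rw [ht, pow_add, pow_mul, h4, pow_add, pow_mul, h4', one_pow, one_mul, one_mul]
  have hr : t % 4 < 4 := Nat.mod_lt _ (by norm_num)
  interval_cases h : t % 4
  · exact ⟨1, by push_cast; ring⟩
  · exact ⟨-1, by push_cast; linear_combination Complex.I_sq⟩
  · exact ⟨-1, by push_cast; linear_combination Complex.I_sq⟩
  · exact ⟨1, by push_cast; linear_combination (Complex.I ^ 2 - 1) * Complex.I_sq⟩

private lemma cot_injOn : Set.InjOn Real.cot (Set.Ioo 0 Real.pi) := by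
  intro a ha b hb hab
  have hc : ∀ x : ℝ, Real.cot x = Real.tan (Real.pi / 2 - x) := by
    intro x
    rw [Real.tan_pi_div_two_sub, Real.cot_eq_cos_div_sin, Real.tan_eq_sin_div_cos, inv_div]
  rw [hc a, hc b] at hab
  have h1 : Real.pi / 2 - a ∈ Set.Ioo (-(Real.pi / 2)) (Real.pi / 2) := by
    constructor <;> [linarith [ha.2]; linarith [ha.1]]
  have h2 : Real.pi / 2 - b ∈ Set.Ioo (-(Real.pi / 2)) (Real.pi / 2) := by
    constructor <;> [linarith [hb.2]; linarith [hb.1]]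
  have := Real.injOn_tan h1 h2 hab
  linarith

private lemma key (n : ℕ) (hn : 1 ≤ n) (p : ℕ) (hp : 0 < p) :
    ∃ z : ℤ, ∑ k ∈ Finset.Icc 1 n,
      ((-1 : ℝ) ^ (k + 1) * Real.cot ((2 * (k : ℝ) - 1) * Real.pi / (4 * n))) ^ p = z := by
  classical
  have hπ : 0 < Real.pi := Real.pi_pos
  have hn0 : (0 : ℝ) < n := by exact_mod_cast hn
  set θ : ℕ → ℝ := fun k => (2 * (k : ℝ) - 1) * Real.pi / (4 * n) with hθdef
  set e : ℕ → ℝ := fun k => (-1 : ℝ) ^ (k + 1) * Real.cot (θ k) with hedef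
  set ψ : ℕ → ℝ := fun k => if Odd k then θ k else Real.pi - θ k with hψdef
  have hθmem : ∀ k ∈ Finset.Icc 1 n, 0 < θ k ∧ θ k < Real.pi / 2 := by
    intro k hk
    rw [Finset.mem_Icc] at hk
    have h1 : (1 : ℝ) ≤ (k : ℝ) := by exact_mod_cast hk.1
    have h2 : (k : ℝ) ≤ (n : ℝ) := by exact_mod_cast hk.2
    constructor
    · apply div_pos (by nlinarith) (by nlinarith)
    · rw [div_lt_iff₀ (by nlinarith)]
      nlinarith
  have hψmem : ∀ k ∈ Finset.Icc 1 n, ψ k ∈ Set.Ioo 0 Real.pi := by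
    intro k hk
    obtain ⟨h1, h2⟩ := hθmem k hk
    simp only [hψdef, Set.mem_Ioo]
    split_ifs <;> constructor <;> linarith
  have hcot : ∀ k ∈ Finset.Icc 1 n, Real.cot (ψ k) = e k := by
    intro k hk
    simp only [hψdef, hedef]
    by_cases hodd : Odd k
    · rw [if_pos hodd]
      have : (-1 : ℝ) ^ (k + 1) = 1 := Even.neg_one_pow (by
        rcases hodd with ⟨t, rfl⟩; exact ⟨t + 1, by ring⟩)
      rw [this, one_mul]
    · rw [if_neg hodd]
      have : (-1 : ℝ) ^ (k + 1) = -1 := Odd.neg_one_pow (by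
        rw [Nat.odd_add_one]; exact hodd)
      rw [this, Real.cot_eq_cos_div_sin, Real.cot_eq_cos_div_sin,
        Real.cos_pi_sub, Real.sin_pi_sub]
      ring
  have hangle : ∀ k ∈ Finset.Icc 1 n, ∃ j : ℤ,
      (n : ℝ) * ψ k - Real.pi / 4 = (j : ℝ) * Real.pi := by
    intro k hk
    rw [Finset.mem_Icc] at hk
    by_cases hodd : Odd k
    · have hodd' := hodd
      obtain ⟨t, ht⟩ := hodd'
      refine ⟨t, ?_⟩
      simp only [hψdef, hθdef, if_pos hodd]
      subst ht
      push_cast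
      field_simp
      ring
    · obtain ⟨t, ht⟩ : ∃ t, k = 2 * t := by
        rcases Nat.even_or_odd k with ⟨t, ht⟩ | h
        · exact ⟨t, by omega⟩
        · exact absurd h hodd
      refine ⟨(n : ℤ) - t, ?_⟩
      simp only [hψdef, hθdef, if_neg hodd]
      subst ht
      push_cast
      field_simp
      ring
  have hcs : ∀ k ∈ Finset.Icc 1 n,
      Real.cos ((n : ℝ) * ψ k) = Real.sin ((n : ℝ) * ψ k) := by
    intro k hk
    obtain ⟨j, hj⟩ := hangle k hk
    have h0 : Real.sin ((n : ℝ) * ψ k - Real.pi / 4) = 0 := by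
      rw [hj]; exact Real.sin_int_mul_pi j
    rw [Real.sin_sub, Real.cos_pi_div_four, Real.sin_pi_div_four] at h0
    have h2 : (0 : ℝ) < Real.sqrt 2 / 2 := by positivity
    nlinarith [h0]
  -- injectivity
  have hψinj : ∀ a ∈ Finset.Icc 1 n, ∀ b ∈ Finset.Icc 1 n, ψ a = ψ b → a = b := by
    intro a ha b hb hab
    obtain ⟨ha1, ha2⟩ := hθmem a ha
    obtain ⟨hb1, hb2⟩ := hθmem b hb
    have hth : θ a = θ b → a = b := by
      intro h
      simp only [hθdef] at h
      field_simp at h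
      have h' : (a : ℝ) = b := by linarith
      exact_mod_cast h'
    simp only [hψdef] at hab
    split_ifs at hab with h1 h2 h2
    · exact hth hab
    · linarith
    · linarith
    · exact hth (by linarith)
  have hinj : ∀ a ∈ Finset.Icc 1 n, ∀ b ∈ Finset.Icc 1 n, e a = e b → a = b := by
    intro a ha b hb hab
    rw [← hcot a ha, ← hcot b hb] at hab
    exact hψinj a ha b hb (cot_injOn (hψmem a ha) (hψmem b hb) hab)
  -- complex polynomial
  set Pc : Polynomial ℂ := Polynomial.C ((1 + Complex.I) / 2) * (Polynomial.X + Polynomial.C Complex.I) ^ n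
      + Polynomial.C ((1 - Complex.I) / 2) * (Polynomial.X - Polynomial.C Complex.I) ^ n with hPcdef
  have hPccoeff : ∀ j, ∃ u : ℤ, Pc.coeff j = (u : ℂ) := by
    intro j
    obtain ⟨u, hu⟩ := intcoef (n - j)
    refine ⟨u * (n.choose j : ℤ), ?_⟩
    have hsub : Polynomial.X - Polynomial.C Complex.I
        = Polynomial.X + Polynomial.C (-Complex.I) := by
      rw [map_neg, sub_eq_add_neg]
    rw [hPcdef, Polynomial.coeff_add, Polynomial.coeff_C_mul, Polynomial.coeff_C_mul,
      hsub, Polynomial.coeff_X_add_C_pow, Polynomial.coeff_X_add_C_pow]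
    push_cast
    linear_combination (n.choose j : ℂ) * hu
  have hPccoeffn : Pc.coeff n = 1 := by
    obtain ⟨u, hu⟩ := hPccoeff n
    have hsub : Polynomial.X - Polynomial.C Complex.I
        = Polynomial.X + Polynomial.C (-Complex.I) := by
      rw [map_neg, sub_eq_add_neg]
    rw [hPcdef, Polynomial.coeff_add, Polynomial.coeff_C_mul, Polynomial.coeff_C_mul,
      hsub, Polynomial.coeff_X_add_C_pow, Polynomial.coeff_X_add_C_pow]
    simp
    ring
  have hdegle : Pc.natDegree ≤ n := by
    apply le_trans (Polynomial.natDegree_add_le _ _)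
    apply max_le
    · apply le_trans (Polynomial.natDegree_C_mul_le _ _)
      rw [Polynomial.natDegree_pow, Polynomial.natDegree_X_add_C, mul_one]
    · apply le_trans (Polynomial.natDegree_C_mul_le _ _)
      rw [Polynomial.natDegree_pow, Polynomial.natDegree_X_sub_C, mul_one]
  have hdeg : Pc.natDegree = n :=
    le_antisymm hdegle (Polynomial.le_natDegree_of_ne_zero (by rw [hPccoeffn]; exact one_ne_zero))
  have hmon : Pc.Monic := by
    rw [Polynomial.Monic, Polynomial.leadingCoeff, hdeg, hPccoeffn]
  have hPcne : Pc ≠ 0 := hmon.ne_zero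
  -- roots
  have hroot : ∀ k ∈ Finset.Icc 1 n, Pc.eval ((e k : ℝ) : ℂ) = 0 := by
    intro k hk
    obtain ⟨hψ0, hψπ⟩ := hψmem k hk
    set s := Real.sin (ψ k) with hsdef
    set c := Real.cos (ψ k) with hcdef
    have hs : 0 < s := Real.sin_pos_of_pos_of_lt_pi hψ0 hψπ
    have hsC : ((s : ℝ) : ℂ) ≠ 0 := by exact_mod_cast hs.ne'
    have he : (e k : ℝ) = c / s := by
      rw [← hcot k hk, Real.cot_eq_cos_div_sin]
    have h1 : ((e k : ℝ) : ℂ) + Complex.I = (↑c + ↑s * Complex.I) * (↑s)⁻¹ := by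
      rw [he]
      push_cast
      field_simp
      all_goals ring
    have h2 : ((e k : ℝ) : ℂ) - Complex.I = (↑c - ↑s * Complex.I) * (↑s)⁻¹ := by
      rw [he]
      push_cast
      field_simp
      all_goals ring
    have hdm1 : (↑c + ↑s * Complex.I) ^ n
        = ↑(Real.cos ((n : ℝ) * ψ k)) + ↑(Real.sin ((n : ℝ) * ψ k)) * Complex.I := by
      have := Complex.cos_add_sin_mul_I_pow n (ψ k : ℂ)
      rw [hcdef, hsdef]
      push_cast [← Complex.ofReal_cos, ← Complex.ofReal_sin] at this ⊢
      convert this using 3 <;> push_cast <;> ring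
    have hdm2 : (↑c - ↑s * Complex.I) ^ n
        = ↑(Real.cos ((n : ℝ) * ψ k)) - ↑(Real.sin ((n : ℝ) * ψ k)) * Complex.I := by
      have := Complex.cos_add_sin_mul_I_pow n (-(ψ k : ℂ))
      rw [Complex.cos_neg, Complex.sin_neg] at this
      rw [hcdef, hsdef]
      push_cast [← Complex.ofReal_cos, ← Complex.ofReal_sin] at this ⊢
      rw [show (↑(Real.cos (ψ k)) : ℂ) - ↑(Real.sin (ψ k)) * Complex.I
        = ↑(Real.cos (ψ k)) + -↑(Real.sin (ψ k)) * Complex.I by ring]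
      rw [this]
      rw [show (n : ℂ) * -(ψ k : ℂ) = -((n : ℝ) * ψ k : ℝ) by push_cast; ring]
      rw [Complex.cos_neg, Complex.sin_neg]
      push_cast
      ring
    have hCS : (Real.cos ((n : ℝ) * ψ k) : ℂ) = (Real.sin ((n : ℝ) * ψ k) : ℂ) := by
      exact congrArg Complex.ofReal (hcs k hk)
    set S : ℂ := (Real.sin ((n : ℝ) * ψ k) : ℂ) with hSdef
    rw [hPcdef]
    simp only [Polynomial.eval_add, Polynomial.eval_mul, Polynomial.eval_C,
      Polynomial.eval_pow, Polynomial.eval_X, Polynomial.eval_sub]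
    rw [h1, h2, mul_pow, mul_pow, hdm1, hdm2, hCS]
    linear_combination (S * ((↑s)⁻¹ : ℂ) ^ n) * Complex.I_sq
  -- multiset of roots
  set sC : Multiset ℂ := (Finset.Icc 1 n).val.map (fun k => ((e k : ℝ) : ℂ)) with hsCdef
  have hnodup : sC.Nodup := by
    apply Multiset.Nodup.map_on _ (Finset.Icc 1 n).nodup
    intro a ha b hb hab
    exact hinj a ha b hb (Complex.ofReal_injective hab)
  have hcard : Multiset.card sC = n := by
    rw [hsCdef, Multiset.card_map]
    simp [Nat.card_Icc]
  have hleroots : sC ≤ Pc.roots := by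
    rw [Multiset.le_iff_count]
    intro r
    by_cases hr : r ∈ sC
    · rw [Multiset.count_eq_one_of_mem hnodup hr]
      rw [Polynomial.count_roots]
      obtain ⟨k, hk, rfl⟩ := Multiset.mem_map.mp hr
      exact (Polynomial.rootMultiplicity_pos hPcne).mpr (hroot k hk)
    · rw [Multiset.count_eq_zero_of_notMem hr]
      exact Nat.zero_le _
  have hdvd : (sC.map fun a => Polynomial.X - Polynomial.C a).prod ∣ Pc :=
    (Multiset.prod_X_sub_C_dvd_iff_le_roots hPcne sC).mpr hleroots
  have hmonprod : (sC.map fun a => Polynomial.X - Polynomial.C a).prod.Monic :=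
    Polynomial.monic_multiset_prod_of_monic _ _ (fun a _ => Polynomial.monic_X_sub_C a)
  have hdegprod : (sC.map fun a => Polynomial.X - Polynomial.C a).prod.natDegree = n := by
    rw [Polynomial.natDegree_multiset_prod_X_sub_C_eq_card, hcard]
  have hPceq : Pc = (sC.map fun a => Polynomial.X - Polynomial.C a).prod := by
    obtain ⟨r, hr⟩ := hdvd
    have hrne : r ≠ 0 := by
      rintro rfl
      rw [mul_zero] at hr
      exact hPcne hr
    have hdegr : r.natDegree = 0 := by
      have := Polynomial.natDegree_mul hmonprod.ne_zero hrne
      rw [← hr, hdeg, hdegprod] at this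
      omega
    have hrmon : r.Monic := by
      have h1 : Pc.leadingCoeff = (sC.map fun a => Polynomial.X - Polynomial.C a).prod.leadingCoeff * r.leadingCoeff := by
        rw [hr, Polynomial.leadingCoeff_mul]
      rw [hmon, hmonprod, one_mul] at h1
      exact h1.symm
    rw [hr, hrmon.natDegree_eq_zero.mp hdegr, mul_one]
  -- real polynomial
  set sR : Multiset ℝ := (Finset.Icc 1 n).val.map e with hsRdef
  have hcardR : Multiset.card sR = n := by
    rw [hsRdef, Multiset.card_map]
    simp [Nat.card_Icc]
  set Q : Polynomial ℝ := (sR.map fun a => Polynomial.X - Polynomial.C a).prod with hQdef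
  have hmapQ : Q.map (algebraMap ℝ ℂ) = Pc := by
    rw [hQdef, Polynomial.map_multiset_prod, hPceq, hsCdef, hsRdef]
    rw [Multiset.map_map, Multiset.map_map, Multiset.map_map]
    congr 1
    apply Multiset.map_congr rfl
    intro x _
    simp [Polynomial.map_sub]
  have hQcoeff : ∀ j, ∃ u : ℤ, Q.coeff j = (u : ℝ) := by
    intro j
    obtain ⟨u, hu⟩ := hPccoeff j
    refine ⟨u, ?_⟩
    have : (Q.map (algebraMap ℝ ℂ)).coeff j = (u : ℂ) := by rw [hmapQ]; exact hu
    rw [Polynomial.coeff_map, Complex.coe_algebraMap] at this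
    exact_mod_cast this
  have hesymmZ : ∀ i, sR.esymm i ∈ (⊥ : Subring ℝ) := by
    intro i
    by_cases hi : i ≤ n
    · have h1 := Multiset.prod_X_sub_C_coeff sR (show n - i ≤ Multiset.card sR by omega)
      rw [hcardR] at h1
      have h2 : n - (n - i) = i := by omega
      rw [h2] at h1
      obtain ⟨u, hu⟩ := hQcoeff (n - i)
      have : sR.esymm i = (-1 : ℝ) ^ i * (u : ℝ) := by
        have h3 : ((-1 : ℝ) ^ i) * ((-1 : ℝ) ^ i) = 1 := by
          rw [← pow_add]
          exact Even.neg_one_pow ⟨i, by ring⟩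
        rw [hQdef] at hu
        rw [h1] at hu
        calc sR.esymm i = ((-1 : ℝ) ^ i * (-1 : ℝ) ^ i) * sR.esymm i := by rw [h3, one_mul]
          _ = (-1 : ℝ) ^ i * ((-1 : ℝ) ^ i * sR.esymm i) := by ring
          _ = (-1 : ℝ) ^ i * (u : ℝ) := by rw [hu]
      rw [this]
      refine Subring.mul_mem _ ?_ ?_
      · exact pow_mem (Subring.neg_mem _ (Subring.one_mem _)) i
      · exact Subring.mem_bot.mpr ⟨u, rfl⟩
    · have : sR.esymm i = 0 := by
        rw [Multiset.esymm, Multiset.powersetCard_eq_empty i (by omega)]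
        simp
      rw [this]
      exact Subring.zero_mem _
  -- Newton identities
  set σ := {x // x ∈ Finset.Icc 1 n} with hσdef
  set v : σ → ℝ := fun x => e x.1 with hvdef
  have huniv : (Finset.univ.val.map v) = sR := by
    rw [Finset.univ_eq_attach, hsRdef]
    rw [Finset.attach]
    exact Multiset.attach_map_val' (Finset.Icc 1 n).val e
  have hesymm' : ∀ i, MvPolynomial.aeval v (MvPolynomial.esymm σ ℝ i) = sR.esymm i := by
    intro i
    rw [MvPolynomial.aeval_esymm_eq_multiset_esymm, huniv]
  have hpsum : ∀ q, MvPolynomial.aeval v (MvPolynomial.psum σ ℝ q)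
      = ∑ k ∈ Finset.Icc 1 n, e k ^ q := by
    intro q
    have hps : MvPolynomial.psum σ ℝ q = ∑ i : σ, MvPolynomial.X i ^ q := rfl
    rw [hps, map_sum (MvPolynomial.aeval v) (fun i : σ => MvPolynomial.X i ^ q) Finset.univ]
    simp only [map_pow, MvPolynomial.aeval_X]
    rw [Finset.univ_eq_attach]
    exact Finset.sum_attach (Finset.Icc 1 n) (fun k => e k ^ q)
  have main : ∀ q, 0 < q → (∑ k ∈ Finset.Icc 1 n, e k ^ q) ∈ (⊥ : Subring ℝ) := by
    intro q
    induction q using Nat.strong_induction_on with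
    | _ q ih =>
      intro hq
      have hid := congrArg (MvPolynomial.aeval v)
        (MvPolynomial.psum_eq_mul_esymm_sub_sum σ ℝ q hq)
      rw [hpsum] at hid
      rw [map_sub, map_mul, map_mul, map_pow, map_neg, map_one, map_natCast, hesymm',
        map_sum] at hid
      simp only [map_mul, map_pow, map_neg, map_one, hesymm', hpsum] at hid
      rw [hid]
      apply Subring.sub_mem
      · refine Subring.mul_mem _ (Subring.mul_mem _ ?_ ?_) (hesymmZ q)
        · exact pow_mem (Subring.neg_mem _ (Subring.one_mem _)) _
        · exact natCast_mem _ _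
      · apply Subring.sum_mem
        intro a ha
        rw [Finset.mem_filter, Finset.HasAntidiagonal.mem_antidiagonal, Set.mem_Ioo] at ha
        have h1 := ha.1
        have h2 := ha.2.1
        have h3 := ha.2.2
        refine Subring.mul_mem _ (Subring.mul_mem _ ?_ (hesymmZ a.1)) ?_
        · exact pow_mem (Subring.neg_mem _ (Subring.one_mem _)) _
        · exact ih a.2 (by omega) (by omega)
  obtain ⟨z, hz⟩ := Subring.mem_bot.mp (main p hp)
  exact ⟨z, hz.symm⟩

theorem stmt_6 (m n : ℕ) (hm : 1 ≤ m) (hn : 1 ≤ n) :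
    (∃ z : ℤ, ∑ k ∈ Finset.Icc 1 n,
        (-1 : ℝ) ^ k * Real.cot ((2 * (k : ℝ) - 1) * Real.pi / (4 * n)) ^ (2 * m - 1) = z) ∧
    (∃ z : ℤ, ∑ k ∈ Finset.Icc 1 n,
        Real.cot ((2 * (k : ℝ) - 1) * Real.pi / (4 * n)) ^ (2 * m) = z) := by
  constructor
  · obtain ⟨z, hz⟩ := key n hn (2 * m - 1) (by omega)
    refine ⟨-z, ?_⟩
    have hodd : Odd (2 * m - 1) := by
      have h2 : 2 * m - 1 = 2 * (m - 1) + 1 := by omega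
      rw [h2]
      exact odd_two_mul_add_one _
    have heq : ∑ k ∈ Finset.Icc 1 n,
        (-1 : ℝ) ^ k * Real.cot ((2 * (k : ℝ) - 1) * Real.pi / (4 * n)) ^ (2 * m - 1)
        = -∑ k ∈ Finset.Icc 1 n,
          ((-1 : ℝ) ^ (k + 1) * Real.cot ((2 * (k : ℝ) - 1) * Real.pi / (4 * n))) ^ (2 * m - 1) := by
      rw [← Finset.sum_neg_distrib]
      apply Finset.sum_congr rfl
      intro k _
      rw [mul_pow]
      have h1 : ((-1 : ℝ) ^ (k + 1)) ^ (2 * m - 1) = (-1 : ℝ) ^ (k + 1) := by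
        rcases Nat.even_or_odd (k + 1) with h | h
        · rw [h.neg_one_pow, one_pow]
        · rw [h.neg_one_pow, hodd.neg_one_pow]
      rw [h1, pow_succ]
      ring
    rw [heq, hz]
    push_cast
    ring
  · obtain ⟨z, hz⟩ := key n hn (2 * m) (by omega)
    refine ⟨z, ?_⟩
    rw [← hz]
    apply Finset.sum_congr rfl
    intro k hk
    rw [mul_pow]
    have h1 : ((-1 : ℝ) ^ (k + 1)) ^ (2 * m) = 1 := by
      rw [← pow_mul]
      exact Even.neg_one_pow ⟨(k + 1) * m, by ring⟩
    rw [h1, one_mul]
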